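/- arXiv:2410.20188 — 2 statements merged into one kernel-verified Lean document; each statement's English description precedes it below -/
import Mathlib

section
/- Let M be a module over the ring C⁰(ℤ_p,𝔽_p) of continuous functions ℤ_p → 𝔽_p. Assume there are pairwise distinct p-adic integers x₁,…,x_n and submodules M'₁,…,M'_n such that M is the internal direct sum of M'₁,…,M'_n, and 0 ≠ M'_i ⊆ M_(x_i) for every i. Then M'_i = M_(x_i) and M'_i ≅ M_{x_i} for every i. -/
/-- `𝔽_p = ZMod p` carries the discrete topology. -/
instance (p : ℕ) : TopologicalSpace (ZMod p) := ⊥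

instance (p : ℕ) : DiscreteTopology (ZMod p) := ⟨rfl⟩

/-- For `x ∈ ℤ_p`, the maximal ideal `𝓘(x) = {F ∈ C⁰(ℤ_p, 𝔽_p) : F(x) = 0}` of the
ring of continuous functions `ℤ_p → 𝔽_p`. -/
noncomputable def evalIdeal (p : ℕ) [Fact p.Prime] (x : PadicInt p) : Ideal C(PadicInt p, ZMod p) :=
  RingHom.ker ((Pi.evalRingHom (fun _ : PadicInt p => ZMod p) x).comp
    (ContinuousMap.coeFnRingHom))

/-- `M_(x) = {u ∈ M : 𝓘(x)·u = 0}`, a submodule of `M`. -/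
def eigenSubmodule (p : ℕ) [Fact p.Prime]
    (M : Type*) [AddCommGroup M] [Module C(PadicInt p, ZMod p) M] (x : PadicInt p) :
    Submodule C(PadicInt p, ZMod p) M where
  carrier := {u | ∀ F ∈ evalIdeal p x, F • u = 0}
  add_mem' := by
    intro u v hu hv F hF
    rw [smul_add, hu F hF, hv F hF, add_zero]
  zero_mem' := by intro F _; exact smul_zero F
  smul_mem' := by
    intro c u hu F hF
    rw [smul_comm, hu F hF, smul_zero]

lemma mem_evalIdeal_iff (p : ℕ) [Fact p.Prime] (x : PadicInt p)
    (F : C(PadicInt p, ZMod p)) : F ∈ evalIdeal p x ↔ F x = 0 := by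
  rw [evalIdeal, RingHom.mem_ker]; rfl

/-- The characteristic function of the clopen ball `{y | y ≡ x₀ mod p^N}`. -/
noncomputable def chiFun (p : ℕ) [Fact p.Prime] (N : ℕ) (x0 : PadicInt p) :
    C(PadicInt p, ZMod p) where
  toFun := fun y =>
    if PadicInt.toZModPow N y = PadicInt.toZModPow N x0 then 1 else 0
  continuous_toFun := by
    apply IsLocallyConstant.continuous
    rw [IsLocallyConstant.iff_exists_open]
    intro z
    have hp1 : (0 : ℝ) < (p : ℝ) ^ (-N : ℤ) := by
      apply zpow_pos
      exact_mod_cast (Fact.out : p.Prime).pos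
    refine ⟨Metric.ball z ((p : ℝ) ^ (-N : ℤ)), Metric.isOpen_ball, by
      simpa [Metric.mem_ball] using hp1, ?_⟩
    intro y hy
    have h1 : ‖y - z‖ ≤ (p : ℝ) ^ (-N : ℤ) := by
      rw [Metric.mem_ball, dist_eq_norm] at hy
      exact le_of_lt hy
    rw [PadicInt.norm_le_pow_iff_mem_span_pow, ← PadicInt.ker_toZModPow,
      RingHom.mem_ker, map_sub, sub_eq_zero] at h1
    simp only [h1]

lemma chiFun_self (p : ℕ) [Fact p.Prime] (N : ℕ) (x0 : PadicInt p) :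
    chiFun p N x0 x0 = 1 := by
  simp [chiFun]

lemma chiFun_ne (p : ℕ) [Fact p.Prime] (N : ℕ) (x0 y : PadicInt p)
    (h : PadicInt.toZModPow N y ≠ PadicInt.toZModPow N x0) :
    chiFun p N x0 y = 0 := by
  simp [chiFun, h]

/-- Finitely many pairwise distinct p-adic integers are separated mod `p^N` for some `N`. -/
lemma exists_sep (p : ℕ) [Fact p.Prime] (n : ℕ) (x : Fin n → PadicInt p)
    (hx : Function.Injective x) (i : Fin n) :
    ∃ N : ℕ, ∀ j, j ≠ i →
      PadicInt.toZModPow N (x j) ≠ PadicInt.toZModPow N (x i) := by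
  have key : ∀ j : Fin n, j ≠ i → ∃ m : ℕ,
      PadicInt.toZModPow m (x j) ≠ PadicInt.toZModPow m (x i) := by
    intro j hj
    by_contra h
    push_neg at h
    apply hj
    apply hx
    rw [← sub_eq_zero, ← norm_eq_zero]
    have hle : ∀ m : ℕ, ‖x j - x i‖ ≤ (p : ℝ) ^ (-m : ℤ) := by
      intro m
      rw [PadicInt.norm_le_pow_iff_mem_span_pow, ← PadicInt.ker_toZModPow,
        RingHom.mem_ker, map_sub, sub_eq_zero]
      exact h m
    have hplt : (1 : ℝ) < (p : ℝ) := by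
      exact_mod_cast (Fact.out : p.Prime).one_lt
    have htend : Filter.Tendsto (fun m : ℕ => (p : ℝ) ^ (-m : ℤ)) Filter.atTop (nhds 0) := by
      have : Filter.Tendsto (fun m : ℕ => ((p : ℝ)⁻¹) ^ m) Filter.atTop (nhds 0) := by
        apply tendsto_pow_atTop_nhds_zero_of_lt_one
        · positivity
        · rw [inv_lt_one_iff₀]; right; exact hplt
      refine this.congr fun m => ?_
      rw [inv_pow, ← zpow_natCast, ← zpow_neg]
    have h0 : ‖x j - x i‖ ≤ 0 := ge_of_tendsto htend (Filter.Eventually.of_forall hle)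
    exact le_antisymm h0 (norm_nonneg _)
  choose f hf using key
  refine ⟨Finset.univ.sup (fun j : Fin n => if h : j ≠ i then f j h else 0), fun j hj hcon => ?_⟩
  apply hf j hj
  have hle : f j hj ≤ Finset.univ.sup (fun j : Fin n => if h : j ≠ i then f j h else 0) := by
    have := Finset.le_sup (f := fun j : Fin n => if h : j ≠ i then f j h else 0)
      (Finset.mem_univ j)
    simpa [hj] using this
  calc PadicInt.toZModPow (f j hj) (x j)
      = ZMod.cast (PadicInt.toZModPow _ (x j)) := (PadicInt.cast_toZModPow _ _ hle _).symm
    _ = ZMod.cast (PadicInt.toZModPow _ (x i)) := by rw [hcon]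
    _ = PadicInt.toZModPow (f j hj) (x i) := PadicInt.cast_toZModPow _ _ hle _

/-- Let `M` be a module over `C⁰(ℤ_p, 𝔽_p)`. Assume there are pairwise
distinct p-adic integers `x₁,…,xₙ` and submodules `M'₁,…,M'ₙ` such that `M` is the
internal direct sum of `M'₁,…,M'ₙ`, and `0 ≠ M'ᵢ ⊆ M_(xᵢ)` for every `i`. Then
`M'ᵢ = M_(xᵢ)` and `M'ᵢ ≅ M_{xᵢ}` for every `i`. -/
theorem eq_eigenSubmodule_of_internal (p : ℕ) [Fact p.Prime]
    (M : Type*) [AddCommGroup M] [Module C(PadicInt p, ZMod p) M]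
    (n : ℕ) (x : Fin n → PadicInt p) (hx : Function.Injective x)
    (M' : Fin n → Submodule C(PadicInt p, ZMod p) M)
    (hMint : DirectSum.IsInternal M')
    (hne : ∀ i, M' i ≠ ⊥)
    (hle : ∀ i, M' i ≤ eigenSubmodule p M (x i)) :
    ∀ i, M' i = eigenSubmodule p M (x i) ∧
      Nonempty ((M' i) ≃ₗ[C(PadicInt p, ZMod p)]
        (M ⧸ (evalIdeal p (x i) • (⊤ : Submodule C(PadicInt p, ZMod p) M)))) := by
  intro i
  obtain ⟨N₀, hN₀⟩ := exists_sep p n x hx i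
  set R := C(PadicInt p, ZMod p)
  set χ : R := chiFun p N₀ (x i) with hχdef
  have hχi : χ (x i) = 1 := chiFun_self p N₀ (x i)
  have hχj : ∀ j, j ≠ i → χ (x j) = 0 := fun j hj => chiFun_ne p N₀ _ _ (hN₀ j hj)
  have he_mem : (1 - χ) ∈ evalIdeal p (x i) := by
    rw [mem_evalIdeal_iff, ContinuousMap.sub_apply, ContinuousMap.one_apply, hχi, sub_self]
  -- χ kills each M' j, j ≠ i
  have hkill : ∀ j, j ≠ i → ∀ u ∈ M' j, χ • u = 0 := by
    intro j hj u hu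
    exact hle j hu χ (by rw [mem_evalIdeal_iff]; exact hχj j hj)
  set Nsub : Submodule R M := ⨆ (j) (_ : j ≠ i), M' j with hNsubdef
  have hNkill : ∀ u ∈ Nsub, χ • u = 0 := by
    have hker : Nsub ≤ LinearMap.ker (LinearMap.lsmul R M χ) := by
      refine iSup_le fun j => iSup_le fun hj => fun u hu => ?_
      rw [LinearMap.mem_ker, LinearMap.lsmul_apply]
      exact hkill j hj u hu
    intro u hu
    exact (LinearMap.mem_ker).mp (hker hu)
  have hfix : ∀ u : M, (∀ F ∈ evalIdeal p (x i), F • u = 0) → χ • u = u := by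
    intro u hu
    have h0 : (1 - χ) • u = 0 := hu _ he_mem
    rw [sub_smul, one_smul, sub_eq_zero] at h0
    exact h0.symm
  have hdisj : Disjoint (M' i) Nsub := hMint.submodule_iSupIndep i
  have hcompl : IsCompl (M' i) Nsub := by
    refine ⟨hdisj, codisjoint_iff.mpr ?_⟩
    rw [eq_top_iff, ← hMint.submodule_iSup_eq_top]
    refine iSup_le fun j => ?_
    by_cases hj : j = i
    · subst hj; exact le_sup_left
    · exact le_trans (le_iSup₂ (f := fun j (_ : j ≠ i) => M' j) j hj) le_sup_right
  -- the decomposition of arbitrary elements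
  have hdec : ∀ m : M, ∃ v ∈ M' i, ∃ w ∈ Nsub, v + w = m :=
    fun m => by
      obtain ⟨v, w, hv, hw, h⟩ := Submodule.codisjoint_iff_exists_add_eq.mp hcompl.codisjoint m
      exact ⟨v, hv, w, hw, h⟩
  -- evalIdeal • ⊤ = Nsub
  have hsmul_eq : evalIdeal p (x i) • (⊤ : Submodule R M) = Nsub := by
    apply le_antisymm
    · rw [Submodule.smul_le]
      intro F hF m _
      obtain ⟨v, hv, w, hw, rfl⟩ := hdec m
      have hFv : F • v = 0 := hle i hv F hF
      rw [smul_add, hFv, zero_add]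
      exact Nsub.smul_mem F hw
    · intro u hu
      have : u = (1 - χ) • u := by
        rw [sub_smul, one_smul, hNkill u hu, sub_zero]
      rw [this]
      exact Submodule.smul_mem_smul he_mem trivial
  have heq : M' i = eigenSubmodule p M (x i) := by
    apply le_antisymm (hle i)
    intro u hu
    obtain ⟨v, hv, w, hw, hvw⟩ := hdec u
    have h1 : χ • u = u := hfix u hu
    have h2 : u = v := by
      rw [← h1, ← hvw, smul_add, hfix v (fun F hF => hle i hv F hF), hNkill w hw, add_zero]
    rw [h2]
    exact hv
  refine ⟨heq, ⟨?_⟩⟩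
  exact ((Submodule.quotientEquivOfIsCompl Nsub (M' i) hcompl.symm).symm.trans
    (Submodule.quotEquivOfEq _ _ hsmul_eq).symm)
end

section
/- Let K be a perfect field of characteristic p and R = K[x₁,…,x_n]. Let I = ⟨f₁+g₁,…,f_m+g_m, h₁,…,h_l⟩ and I₀ = ⟨f₁,…,f_m⟩ be ideals contained in 𝔪, where each f_i is nonzero and weighted homogeneous of type (w,d₀) (all of the same weighted degree d₀), I₀ is 𝔪-primary, wmd(g_i) > d₀ for every nonzero g_i, and wmd(h_j) > d₀ for every nonzero h_j. Then for every a ∈ (ℕ⁺)ⁿ one has c^{𝔪(a)}(I) = c^{𝔪(a)}(I₀) = w(a)/d₀. -/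
open Filter

/-- The Frobenius power `I^{[p^e]}`. -/
def frobeniusPower (p e : ℕ) {R : Type*} [CommRing R] (I : Ideal R) : Ideal R :=
  Ideal.span ((fun f => f ^ p ^ e) '' (I : Set R))

/-- The ν-invariant `ν^𝔞_I(p^e) = max {n ∈ ℕ : Iⁿ ⊄ 𝔞^{[p^e]}}`. -/
noncomputable def nuInv (p : ℕ) {R : Type*} [CommRing R] (𝔞 I : Ideal R) (e : ℕ) : ℕ :=
  sSup {n : ℕ | ¬ I ^ n ≤ frobeniusPower p e 𝔞}

/-- Weighted degree of an exponent vector: `w(a) = Σ wᵢ aᵢ`. -/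
def wdeg {n : ℕ} (w : Fin n → ℕ) (a : Fin n →₀ ℕ) : ℕ := ∑ i, w i * a i

/-- `wmd f = min {w(a) : a ∈ Supp f}`. -/
noncomputable def wmd {n : ℕ} {K : Type*} [CommSemiring K] (w : Fin n → ℕ)
    (f : MvPolynomial (Fin n) K) : ℕ :=
  sInf (wdeg w '' (f.support : Set (Fin n →₀ ℕ)))

/-- The monomial ideal `𝔪(a) = ⟨x₁^{a₁},…,xₙ^{aₙ}⟩`. -/
noncomputable def mIdeal {n : ℕ} (K : Type*) [CommSemiring K] (a : Fin n → ℕ) :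
    Ideal (MvPolynomial (Fin n) K) :=
  Ideal.span (Set.range fun i : Fin n => MvPolynomial.X i ^ a i)

/-- The maximal ideal `𝔪 = ⟨x₁,…,xₙ⟩`. -/
noncomputable def mMax {n : ℕ} (K : Type*) [CommSemiring K] : Ideal (MvPolynomial (Fin n) K) :=
  Ideal.span (Set.range (MvPolynomial.X : Fin n → MvPolynomial (Fin n) K))


section AuxSemiring
open MvPolynomial
variable {n : ℕ} {K : Type*} [CommSemiring K]

theorem wdeg_add (w : Fin n → ℕ) (b c : Fin n →₀ ℕ) :
    wdeg w (b + c) = wdeg w b + wdeg w c := by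
  simp [wdeg, Finsupp.add_apply, Nat.mul_add, Finset.sum_add_distrib]

theorem wdeg_single (w : Fin n → ℕ) (i : Fin n) (k : ℕ) :
    wdeg w (Finsupp.single i k) = w i * k := by
  rw [wdeg, Finset.sum_eq_single i]
  · simp
  · intro j _ hj; simp [Finsupp.single_apply, Ne.symm hj]
  · simp

/-- monomial criterion, direction A -/
theorem mem_mIdeal_of_support (c : Fin n → ℕ) (F : MvPolynomial (Fin n) K)
    (H : ∀ b ∈ F.support, ∃ i, c i ≤ b i) : F ∈ mIdeal K c := by
  rw [← F.support_sum_monomial_coeff]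
  refine Ideal.sum_mem _ (fun b hb => ?_)
  obtain ⟨i, hi⟩ := H b hb
  have hle : Finsupp.single i (c i) ≤ b := Finsupp.single_le_iff.mpr hi
  have hX : (MvPolynomial.X i ^ c i : MvPolynomial (Fin n) K) ∈ mIdeal K c :=
    Ideal.subset_span ⟨i, rfl⟩
  have : (monomial b) (coeff b F) =
      (monomial (b - Finsupp.single i (c i))) (coeff b F) * MvPolynomial.X i ^ c i := by
    rw [MvPolynomial.X_pow_eq_monomial, MvPolynomial.monomial_mul, mul_one,
      tsub_add_cancel_of_le hle]
  rw [this]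
  exact Ideal.mul_mem_left _ _ hX

/-- monomial criterion, direction B -/
theorem support_of_mem_mIdeal {c : Fin n → ℕ} {F : MvPolynomial (Fin n) K}
    (hF : F ∈ mIdeal K c) : ∀ b ∈ F.support, ∃ i, c i ≤ b i := by
  intro b hb
  rw [mIdeal, Ideal.mem_span_range_iff_exists_fun] at hF
  obtain ⟨r, hr⟩ := hF
  have hco : coeff b F ≠ 0 := MvPolynomial.mem_support_iff.mp hb
  rw [← hr] at hco
  rw [MvPolynomial.coeff_sum] at hco
  obtain ⟨i, -, hi⟩ := Finset.exists_ne_zero_of_sum_ne_zero hco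
  rw [MvPolynomial.X_pow_eq_monomial, MvPolynomial.coeff_mul_monomial'] at hi
  by_cases hle : Finsupp.single i (c i) ≤ b
  · exact ⟨i, Finsupp.single_le_iff.mp hle⟩
  · simp [hle] at hi

theorem mem_mIdeal_of_support_subset {c : Fin n → ℕ} {F G : MvPolynomial (Fin n) K}
    (hsub : G.support ⊆ F.support) (hF : F ∈ mIdeal K c) : G ∈ mIdeal K c :=
  mem_mIdeal_of_support c G fun b hb => support_of_mem_mIdeal hF b (hsub hb)


/-- ideal of polynomials all of whose monomials have weighted degree ≥ t -/
def wIdeal (w : Fin n → ℕ) (t : ℕ) : Ideal (MvPolynomial (Fin n) K) where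
  carrier := {F | ∀ b ∈ F.support, t ≤ wdeg w b}
  zero_mem' := by simp
  add_mem' := by
    intro F G hF hG b hb
    rcases Finset.mem_union.mp (MvPolynomial.support_add hb) with hb' | hb'
    · exact hF b hb'
    · exact hG b hb'
  smul_mem' := by
    intro r F hF b hb
    rw [smul_eq_mul] at hb
    obtain ⟨u, hu, v, hv, huv⟩ := Finset.mem_add.mp (MvPolynomial.support_mul _ _ hb)
    subst huv
    rw [wdeg_add]
    exact le_add_left (hF v hv)

theorem mem_wIdeal_iff {w : Fin n → ℕ} {t : ℕ} {F : MvPolynomial (Fin n) K} :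
    F ∈ wIdeal w t ↔ ∀ b ∈ F.support, t ≤ wdeg w b := Iff.rfl

theorem wIdeal_anti {w : Fin n → ℕ} {s t : ℕ} (hst : s ≤ t) :
    (wIdeal w t : Ideal (MvPolynomial (Fin n) K)) ≤ wIdeal w s :=
  fun _ hF b hb => le_trans hst (hF b hb)

theorem mul_mem_wIdeal {w : Fin n → ℕ} {s t : ℕ} {F G : MvPolynomial (Fin n) K}
    (hF : F ∈ wIdeal w s) (hG : G ∈ wIdeal w t) : F * G ∈ wIdeal w (s + t) := by
  intro b hb
  obtain ⟨u, hu, v, hv, huv⟩ := Finset.mem_add.mp (MvPolynomial.support_mul _ _ hb)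
  subst huv
  rw [wdeg_add]
  exact add_le_add (hF u hu) (hG v hv)

theorem pow_le_wIdeal {w : Fin n → ℕ} {d : ℕ} {I : Ideal (MvPolynomial (Fin n) K)}
    (hI : I ≤ wIdeal w d) (N : ℕ) : I ^ N ≤ wIdeal w (N * d) := by
  induction N with
  | zero => intro F _ b _; simp
  | succ N ih =>
    rw [pow_succ]
    refine le_trans (Ideal.mul_le.mpr fun r hr s hs => ?_) (le_refl _)
    have := mul_mem_wIdeal (ih hr) (hI hs)
    rwa [show N * d + d = (N + 1) * d by ring] at this

/-- weighted-homogeneous component of degree t -/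
noncomputable def whC (w : Fin n → ℕ) (t : ℕ) (F : MvPolynomial (Fin n) K) :
    MvPolynomial (Fin n) K :=
  ∑ b ∈ F.support, if wdeg w b = t then monomial b (coeff b F) else 0

theorem coeff_whC (w : Fin n → ℕ) (t : ℕ) (F : MvPolynomial (Fin n) K) (b : Fin n →₀ ℕ) :
    coeff b (whC w t F) = if wdeg w b = t then coeff b F else 0 := by
  rw [whC, MvPolynomial.coeff_sum]
  by_cases hb : b ∈ F.support
  · rw [Finset.sum_eq_single_of_mem b hb]
    · split_ifs with h
      · rw [MvPolynomial.coeff_monomial, if_pos rfl]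
      · rw [MvPolynomial.coeff_zero]
    · intro c _ hc
      split_ifs with h
      · rw [MvPolynomial.coeff_monomial, if_neg hc]
      · rw [MvPolynomial.coeff_zero]
  · have hc0 : coeff b F = 0 := MvPolynomial.notMem_support_iff.mp hb
    rw [Finset.sum_eq_zero, hc0, ite_self]
    intro c hc
    split_ifs with h
    · rw [MvPolynomial.coeff_monomial, if_neg]
      intro hcb
      exact hb (hcb ▸ hc)
    · rw [MvPolynomial.coeff_zero]

theorem whC_eq_self {w : Fin n → ℕ} {t : ℕ} {F : MvPolynomial (Fin n) K}
    (H : ∀ b ∈ F.support, wdeg w b = t) : whC w t F = F := by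
  ext b
  rw [coeff_whC]
  split_ifs with h
  · rfl
  · by_cases hb : b ∈ F.support
    · exact absurd (H b hb) h
    · exact (MvPolynomial.notMem_support_iff.mp hb).symm

theorem support_whC_subset (w : Fin n → ℕ) (t : ℕ) (F : MvPolynomial (Fin n) K) :
    (whC w t F).support ⊆ F.support := by
  intro b hb
  rw [MvPolynomial.mem_support_iff, coeff_whC] at hb
  rw [MvPolynomial.mem_support_iff]
  intro h0; apply hb; split_ifs <;> simp [h0]

theorem whC_mem_wIdeal (w : Fin n → ℕ) (t : ℕ) (F : MvPolynomial (Fin n) K) :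
    whC w t F ∈ wIdeal w t := by
  intro b hb
  rw [MvPolynomial.mem_support_iff, coeff_whC] at hb
  split_ifs at hb with h
  · exact le_of_eq h.symm
  · exact absurd rfl hb

theorem whC_sum {w : Fin n → ℕ} {t : ℕ} {α : Type*} (s : Finset α)
    (F : α → MvPolynomial (Fin n) K) :
    whC w t (∑ i ∈ s, F i) = ∑ i ∈ s, whC w t (F i) := by
  ext b
  have : ∀ i ∈ s, coeff b (whC w t (F i)) = if wdeg w b = t then coeff b (F i) else 0 :=
    fun i _ => coeff_whC w t (F i) b
  rw [coeff_whC, MvPolynomial.coeff_sum, MvPolynomial.coeff_sum,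
    Finset.sum_congr rfl this, Finset.sum_ite_irrel, Finset.sum_const_zero]

/-- key multiplicativity: extracting the degree-t part of `r * f` for `f` WH of degree d₀ -/
theorem whC_mul_wh {w : Fin n → ℕ} {d₀ t : ℕ} (hdt : d₀ ≤ t)
    {f : MvPolynomial (Fin n) K} (hf : ∀ b ∈ f.support, wdeg w b = d₀)
    (r : MvPolynomial (Fin n) K) :
    whC w t (r * f) = whC w (t - d₀) r * f := by
  ext b
  rw [coeff_whC, MvPolynomial.coeff_mul, MvPolynomial.coeff_mul]
  by_cases hb : wdeg w b = t
  · rw [if_pos hb]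
    refine Finset.sum_congr rfl fun x hx => ?_
    rw [coeff_whC]
    by_cases hv : coeff x.2 f = 0
    · rw [hv, mul_zero, mul_zero]
    · have hd : wdeg w x.2 = d₀ := hf _ (MvPolynomial.mem_support_iff.mpr hv)
      have hxx : x.1 + x.2 = b := Finset.HasAntidiagonal.mem_antidiagonal.mp hx
      have : wdeg w x.1 = t - d₀ := by
        have := wdeg_add w x.1 x.2
        rw [hxx, hb, hd] at this
        omega
      rw [if_pos this]
  · rw [if_neg hb]
    refine (Finset.sum_eq_zero fun x hx => ?_).symm
    rw [coeff_whC]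
    by_cases hv : coeff x.2 f = 0
    · rw [hv, mul_zero]
    · have hd : wdeg w x.2 = d₀ := hf _ (MvPolynomial.mem_support_iff.mpr hv)
      have hxx : x.1 + x.2 = b := Finset.HasAntidiagonal.mem_antidiagonal.mp hx
      have : wdeg w x.1 ≠ t - d₀ := by
        intro h
        apply hb
        have := wdeg_add w x.1 x.2
        rw [hxx, h, hd] at this
        omega
      rw [if_neg this, zero_mul]

end AuxSemiring

section AuxField
open MvPolynomial
variable {n : ℕ} {K : Type*} [Field K]
section C
variable {n : ℕ} {K : Type*} [Field K]

theorem support_monomial_one {b c : Fin n →₀ ℕ}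
    (hc : c ∈ (monomial b (1 : K)).support) : c = b := by
  rw [MvPolynomial.mem_support_iff, MvPolynomial.coeff_monomial] at hc
  by_contra hne
  exact hc (if_neg fun hbc => hne hbc.symm)

theorem key_induction {w : Fin n → ℕ} {m : ℕ}
    (f g : Fin m → MvPolynomial (Fin n) K) (d₀ D : ℕ) (hd : 0 < d₀) (hDd : d₀ ≤ D)
    (hWH : ∀ i, ∀ b ∈ (f i).support, wdeg w b = d₀)
    (hg : ∀ i, g i ∈ wIdeal w (d₀ + 1))
    (hD : ∀ b : Fin n →₀ ℕ, D ≤ wdeg w b →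
      (monomial b (1 : K)) ∈ Ideal.span (Set.range f)) :
    ∀ N (b : Fin n →₀ ℕ), D + N * d₀ ≤ wdeg w b + d₀ →
      (monomial b (1 : K)) ∈ (Ideal.span (Set.range f)) ^ N ∧
      ∃ G ∈ (Ideal.span (Set.range fun i => f i + g i) :
          Ideal (MvPolynomial (Fin n) K)) ^ N,
        G - monomial b 1 ∈ wIdeal w (wdeg w b + 1) := by
  intro N
  induction N with
  | zero =>
    intro b _
    refine ⟨by simp, monomial b 1, by simp, ?_⟩
    rw [sub_self]
    exact (wIdeal w (wdeg w b + 1)).zero_mem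
  | succ N ih =>
    intro b hb
    set I₀ : Ideal (MvPolynomial (Fin n) K) := Ideal.span (Set.range f) with hI₀def
    set I' : Ideal (MvPolynomial (Fin n) K) :=
      Ideal.span (Set.range fun i => f i + g i) with hI'def
    set t := wdeg w b with htdef
    have hkey1 : D + N * d₀ ≤ t := by
      have : D + (N + 1) * d₀ = D + N * d₀ + d₀ := by ring
      omega
    have hkey2 : D ≤ t := by omega
    have hkey3 : d₀ ≤ t := le_trans hDd hkey2
    -- write monomial b 1 = ∑ r i * f i
    obtain ⟨r, hr⟩ := Ideal.mem_span_range_iff_exists_fun.mp (hD b hkey2)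
    -- extract weighted components
    set ρ : Fin m → MvPolynomial (Fin n) K := fun i => whC w (t - d₀) (r i) with hρdef
    have hmono : whC w t (monomial b (1 : K)) = monomial b 1 := by
      apply whC_eq_self
      intro c hc
      rw [support_monomial_one hc]
    have hsum : ∑ i, ρ i * f i = monomial b 1 := by
      have := congrArg (whC w t) hr
      rw [whC_sum, hmono] at this
      rw [← this]
      exact Finset.sum_congr rfl fun i _ => (whC_mul_wh hkey3 (hWH i) (r i)).symm
    -- ρ i facts
    have hρw : ∀ i, ρ i ∈ wIdeal w (t - d₀) := fun i => whC_mem_wIdeal w _ (r i)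
    have hρsupp : ∀ i, ∀ c ∈ (ρ i).support, wdeg w c = t - d₀ := by
      intro i c hc
      rw [MvPolynomial.mem_support_iff, coeff_whC] at hc
      by_contra hne
      exact hc (if_neg hne)
    have hcond : ∀ i, ∀ c ∈ (ρ i).support, D + N * d₀ ≤ wdeg w c + d₀ := by
      intro i c hc
      rw [hρsupp i c hc]
      omega
    -- part 1 : monomial b 1 ∈ I₀ ^ (N+1)
    have hρI₀ : ∀ i, ρ i ∈ I₀ ^ N := by
      intro i
      rw [← (ρ i).support_sum_monomial_coeff]
      refine Ideal.sum_mem _ fun c hc => ?_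
      have := (ih c (hcond i c hc)).1
      have heq : (monomial c) (coeff c (ρ i)) = MvPolynomial.C (coeff c (ρ i)) * monomial c 1 := by
        rw [MvPolynomial.C_mul_monomial, mul_one]
      rw [heq]
      exact Ideal.mul_mem_left _ _ this
    have hpart1 : (monomial b (1 : K)) ∈ I₀ ^ (N + 1) := by
      rw [← hsum, pow_succ]
      exact Ideal.sum_mem _ fun i _ =>
        Ideal.mul_mem_mul (hρI₀ i) (Ideal.subset_span ⟨i, rfl⟩)
    refine ⟨hpart1, ?_⟩
    -- part 2 : construct G
    have ih2 : ∀ c : Fin n →₀ ℕ, ∃ G : MvPolynomial (Fin n) K,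
        D + N * d₀ ≤ wdeg w c + d₀ →
        G ∈ I' ^ N ∧ G - monomial c 1 ∈ wIdeal w (wdeg w c + 1) := by
      intro c
      by_cases hc : D + N * d₀ ≤ wdeg w c + d₀
      · obtain ⟨G, hG1, hG2⟩ := (ih c hc).2
        exact ⟨G, fun _ => ⟨hG1, hG2⟩⟩
      · exact ⟨0, fun hc' => absurd hc' hc⟩
    choose Gc hGc using ih2
    set σ : Fin m → MvPolynomial (Fin n) K :=
      fun i => ∑ c ∈ (ρ i).support, MvPolynomial.C (coeff c (ρ i)) * Gc c with hσdef
    have hσI' : ∀ i, σ i ∈ I' ^ N := fun i =>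
      Ideal.sum_mem _ fun c hc =>
        Ideal.mul_mem_left _ _ (hGc c (hcond i c hc)).1
    have hσρ : ∀ i, σ i - ρ i ∈ wIdeal w (t - d₀ + 1) := by
      intro i
      have hρeq : ρ i = ∑ c ∈ (ρ i).support, MvPolynomial.C (coeff c (ρ i)) * monomial c 1 := by
        conv_lhs => rw [← (ρ i).support_sum_monomial_coeff]
        exact Finset.sum_congr rfl fun c _ => by rw [MvPolynomial.C_mul_monomial, mul_one]
      rw [hσdef, hρeq, ← Finset.sum_sub_distrib]
      refine Submodule.sum_mem _ fun c hc => ?_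
      rw [← mul_sub]
      refine Ideal.mul_mem_left _ _ ?_
      have := (hGc c (hcond i c hc)).2
      rwa [hρsupp i c hc] at this
    refine ⟨∑ i, σ i * (f i + g i), Ideal.sum_mem _ fun i _ => by
      rw [pow_succ]
      exact Ideal.mul_mem_mul (hσI' i) (Ideal.subset_span ⟨i, rfl⟩), ?_⟩
    have hfg : ∀ i, f i + g i ∈ wIdeal w d₀ := by
      intro i c hc
      rcases Finset.mem_union.mp (MvPolynomial.support_add hc) with hc' | hc'
      · exact le_of_eq (hWH i c hc').symm
      · exact le_trans (Nat.le_succ d₀) (hg i c hc')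
    have key : ∀ i, σ i * (f i + g i) - ρ i * f i ∈ wIdeal w (t + 1) := by
      intro i
      have heq : σ i * (f i + g i) - ρ i * f i
          = (σ i - ρ i) * (f i + g i) + ρ i * g i := by ring
      rw [heq]
      refine Submodule.add_mem _ ?_ ?_
      · have := mul_mem_wIdeal (hσρ i) (hfg i)
        have harith : t - d₀ + 1 + d₀ = t + 1 := by omega
        rwa [harith] at this
      · have := mul_mem_wIdeal (hρw i) (hg i)
        have harith : t - d₀ + (d₀ + 1) = t + 1 := by omega
        rwa [harith] at this
    rw [← hsum, ← Finset.sum_sub_distrib]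
    exact Submodule.sum_mem _ fun i _ => key i


theorem frobeniusPower_eq_map (p e : ℕ) [Fact p.Prime] {R : Type*} [CommRing R] [CharP R p]
    (I : Ideal R) : frobeniusPower p e I = Ideal.map (iterateFrobenius R p e) I := by
  have hfun : (fun x : R => x ^ p ^ e) = ⇑(iterateFrobenius R p e) := by
    funext y; rw [iterateFrobenius_def]
  rw [frobeniusPower, hfun, Ideal.map]

theorem frobeniusPower_mIdeal (p e : ℕ) [Fact p.Prime] [CharP K p] (a : Fin n → ℕ) :
    frobeniusPower p e (mIdeal K a) = mIdeal K (fun i => a i * p ^ e) := by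
  rw [frobeniusPower_eq_map, mIdeal, Ideal.map_span, ← Set.range_comp, mIdeal]
  have : (⇑(iterateFrobenius (MvPolynomial (Fin n) K) p e) ∘ fun i => MvPolynomial.X i ^ a i)
      = fun i : Fin n => MvPolynomial.X i ^ (a i * p ^ e) := by
    funext i
    show iterateFrobenius (MvPolynomial (Fin n) K) p e (MvPolynomial.X i ^ a i)
      = MvPolynomial.X i ^ (a i * p ^ e)
    rw [iterateFrobenius_def, ← pow_mul]
  rw [this]

theorem prod_mem_pow {R : Type*} [CommRing R] (J : Ideal R) {α : Type*} [DecidableEq α]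
    (s : Finset α) (r : α → R) (c : α → ℕ) (h : ∀ i ∈ s, r i ∈ J ^ c i) :
    ∏ i ∈ s, r i ∈ J ^ (∑ i ∈ s, c i) := by
  induction s using Finset.induction with
  | empty => simp
  | insert j s hni ih =>
    rw [Finset.prod_insert hni, Finset.sum_insert hni, pow_add]
    exact Ideal.mul_mem_mul (h j (Finset.mem_insert_self j s))
      (ih fun i hi => h i (Finset.mem_insert_of_mem hi))

theorem monomial_mem_mMax_pow (k : ℕ) (b : Fin n →₀ ℕ) (x : K)
    (hk : k ≤ ∑ i, b i) : monomial b x ∈ (mMax K) ^ k := by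
  rw [MvPolynomial.monomial_eq]
  refine Ideal.mul_mem_left _ _ ?_
  have h1 : (b.prod fun i e => (MvPolynomial.X i : MvPolynomial (Fin n) K) ^ e)
      = ∏ i ∈ b.support, MvPolynomial.X i ^ b i := rfl
  rw [h1]
  have h2 : ∏ i ∈ b.support, (MvPolynomial.X i : MvPolynomial (Fin n) K) ^ b i
      ∈ (mMax K) ^ (∑ i ∈ b.support, b i) :=
    prod_mem_pow _ _ _ _ fun i _ =>
      Ideal.pow_mem_pow (Ideal.subset_span (Set.mem_range_self i)) _
  refine Ideal.pow_le_pow_right ?_ h2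
  calc k ≤ ∑ i, b i := hk
    _ = ∑ i ∈ b.support, b i := (Finset.sum_subset (Finset.subset_univ _)
        (fun i _ hi => Finsupp.notMem_support_iff.mp hi)).symm

end C
end AuxField


theorem limit_aux {p : ℕ} (hp : 1 < p) (ν : ℕ → ℕ) (A d₀ C : ℕ) (hd : 0 < d₀)
    (hub : ∀ᶠ e in atTop, d₀ * ν e ≤ p ^ e * A)
    (hlb : ∀ᶠ e in atTop, p ^ e * A ≤ d₀ * ν e + C)
    {c : ℝ} (hc : Tendsto (fun e : ℕ => (ν e : ℝ) / (p : ℝ) ^ e) atTop (nhds c)) :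
    c = (A : ℝ) / (d₀ : ℝ) := by
  have hq0 : ∀ e : ℕ, (0 : ℝ) < (p : ℝ) ^ e := fun e => by positivity
  have h1 : Tendsto (fun e : ℕ => (d₀ : ℝ) * ((ν e : ℝ) / (p : ℝ) ^ e)) atTop
      (nhds ((d₀ : ℝ) * c)) := hc.const_mul _
  have hinv : Tendsto (fun e : ℕ => (C : ℝ) * ((p : ℝ)⁻¹) ^ e) atTop (nhds 0) := by
    have := tendsto_pow_atTop_nhds_zero_of_lt_one
      (inv_nonneg.mpr (by positivity : (0:ℝ) ≤ (p:ℝ)))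
      (inv_lt_one_of_one_lt₀ (by exact_mod_cast hp))
    simpa using this.const_mul (C : ℝ)
  have hlow : Tendsto (fun e : ℕ => (A : ℝ) - (C : ℝ) * ((p : ℝ)⁻¹) ^ e) atTop
      (nhds (A : ℝ)) := by
    have := (tendsto_const_nhds (x := (A : ℝ)) (f := atTop)).sub hinv
    simpa using this
  have h2 : Tendsto (fun e : ℕ => (d₀ : ℝ) * ((ν e : ℝ) / (p : ℝ) ^ e)) atTop
      (nhds (A : ℝ)) := by
    refine tendsto_of_tendsto_of_tendsto_of_le_of_le' hlow tendsto_const_nhds ?_ ?_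
    · filter_upwards [hlb] with e he
      have hcast : ((p : ℝ) ^ e) * A ≤ (d₀ : ℝ) * ν e + C := by exact_mod_cast he
      have hCq : (↑C * (↑p)⁻¹ ^ e : ℝ) = ↑C / ↑p ^ e := by rw [inv_pow]; ring
      rw [hCq, mul_div_assoc', sub_le_iff_le_add, ← add_div,
        le_div_iff₀ (hq0 e)]
      nlinarith [hcast]
    · filter_upwards [hub] with e he
      have hcast : (d₀ : ℝ) * ν e ≤ ((p : ℝ) ^ e) * A := by exact_mod_cast he
      rw [mul_div_assoc', div_le_iff₀ (hq0 e)]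
      linarith [hcast]
  have := tendsto_nhds_unique h1 h2
  field_simp
  linarith [this]


open MvPolynomial in
/-- Let `K` be a perfect field of characteristic `p`, `R = K[x₁,…,xₙ]`.
Let `I = ⟨f₁+g₁,…,f_m+g_m, h₁,…,h_l⟩` and `I₀ = ⟨f₁,…,f_m⟩` be ideals contained in `𝔪`,
where each `fᵢ` is nonzero and weighted homogeneous of type `(w, d₀)`, `I₀` is
`𝔪`-primary, `wmd(gᵢ) > d₀` for every nonzero `gᵢ`, and `wmd(hⱼ) > d₀` for every nonzero
`hⱼ`. Then for every `a ∈ (ℕ⁺)ⁿ` one has `c^{𝔪(a)}(I) = c^{𝔪(a)}(I₀) = w(a)/d₀`. -/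
theorem fThreshold_eq_of_mPrimary (p : ℕ) [Fact p.Prime] (K : Type*) [Field K]
    [CharP K p] [PerfectRing K p] (n : ℕ) (w : Fin n → ℕ) (hw : ∀ i, 0 < w i)
    (m l : ℕ) (f g : Fin m → MvPolynomial (Fin n) K) (h : Fin l → MvPolynomial (Fin n) K)
    (I I₀ : Ideal (MvPolynomial (Fin n) K))
    (hI : I = Ideal.span (Set.range (fun i => f i + g i) ∪ Set.range h))
    (hI₀ : I₀ = Ideal.span (Set.range f))
    (hIm : I ≤ mMax K) (hI₀m : I₀ ≤ mMax K)
    (d₀ : ℕ)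
    (hf : ∀ i, f i ≠ 0)
    (hWH : ∀ i, ∀ a ∈ (f i).support, wdeg w a = d₀)
    (hprimary : I₀.IsPrimary) (hradical : I₀.radical = mMax K)
    (hg : ∀ i, g i ≠ 0 → d₀ < wmd w (g i))
    (hh : ∀ j, h j ≠ 0 → d₀ < wmd w (h j))
    (a : Fin n → ℕ) (ha : ∀ i, 0 < a i)
    (c c₀ : ℝ)
    (hc : Tendsto (fun e : ℕ => (nuInv p (mIdeal K a) I e : ℝ) / (p : ℝ) ^ e)
      atTop (nhds c))
    (hc₀ : Tendsto (fun e : ℕ => (nuInv p (mIdeal K a) I₀ e : ℝ) / (p : ℝ) ^ e)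
      atTop (nhds c₀)) :
    c = ((∑ i, w i * a i : ℕ) : ℝ) / (d₀ : ℝ) ∧
    c₀ = ((∑ i, w i * a i : ℕ) : ℝ) / (d₀ : ℝ) := by
  classical
  have hp1 : 1 < p := (Fact.out : p.Prime).one_lt
  rcases Nat.eq_zero_or_pos n with hn0 | hn
  · -- degenerate case n = 0
    subst hn0
    have hbot : mMax K = (⊥ : Ideal (MvPolynomial (Fin 0) K)) := by
      rw [mMax, Set.range_eq_empty, Ideal.span_empty]
    have hfrob : ∀ e : ℕ, frobeniusPower p e (mIdeal K a) = ⊥ := by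
      intro e
      have hm0 : mIdeal K a = (⊥ : Ideal (MvPolynomial (Fin 0) K)) := by
        rw [mIdeal, Set.range_eq_empty, Ideal.span_empty]
      rw [hm0, frobeniusPower]
      have hcoe : ((⊥ : Ideal (MvPolynomial (Fin 0) K)) : Set (MvPolynomial (Fin 0) K))
          = {0} := by simp
      rw [hcoe, Set.image_singleton,
        zero_pow (show p ^ e ≠ 0 from (pow_pos (by omega : 0 < p) e).ne')]
      exact Ideal.span_singleton_eq_bot.mpr rfl
    have hnu : ∀ (J : Ideal (MvPolynomial (Fin 0) K)), J = ⊥ →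
        ∀ e, nuInv p (mIdeal K a) J e = 0 := by
      intro J hJ e
      rw [nuInv]
      have hset : {x : ℕ | ¬ J ^ x ≤ frobeniusPower p e (mIdeal K a)} = {0} := by
        ext x
        simp only [Set.mem_setOf_eq, Set.mem_singleton_iff, hfrob e, hJ]
        constructor
        · intro hx
          by_contra h0
          refine hx (le_trans (Ideal.pow_le_pow_right (Nat.pos_of_ne_zero h0)) ?_)
          rw [pow_one]
        · rintro rfl
          rw [pow_zero, Ideal.one_eq_top]
          intro htop
          have h1 : (1 : MvPolynomial (Fin 0) K) ∈ (⊥ : Ideal _) := htop Submodule.mem_top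
          exact one_ne_zero (Ideal.mem_bot.mp h1)
      rw [hset, csSup_singleton]
    have hzero : ∀ (J : Ideal (MvPolynomial (Fin 0) K)), J = ⊥ →
        ∀ x : ℝ, Tendsto (fun e : ℕ => (nuInv p (mIdeal K a) J e : ℝ) / (p : ℝ) ^ e)
          atTop (nhds x) → x = 0 := by
      intro J hJ x hx
      refine tendsto_nhds_unique hx ?_
      have heq : (fun e : ℕ => (nuInv p (mIdeal K a) J e : ℝ) / (p : ℝ) ^ e)
          = fun _ => (0 : ℝ) := by
        funext e
        rw [hnu J hJ e]
        simp
      rw [heq]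
      exact tendsto_const_nhds
    have hCs : ((∑ i, w i * a i : ℕ) : ℝ) = 0 := by simp
    rw [hzero I (le_bot_iff.mp (hbot ▸ hIm)) c hc,
      hzero I₀ (le_bot_iff.mp (hbot ▸ hI₀m)) c₀ hc₀, hCs, zero_div]
    exact ⟨rfl, rfl⟩
  -- main case : n ≥ 1
  set A := ∑ i, w i * a i with hAdef
  set W := ∑ i, w i with hWdef
  have i0 : Fin n := ⟨0, hn⟩
  have hW : 0 < W := by
    calc 0 < w i0 := hw i0
      _ ≤ W := Finset.single_le_sum (fun j _ => Nat.zero_le (w j)) (Finset.mem_univ i0)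
  have hWA : W ≤ A := by
    refine Finset.sum_le_sum fun i _ => ?_
    exact Nat.le_mul_of_pos_right (w i) (ha i)
  have hA : 0 < A := lt_of_lt_of_le hW hWA
  have hmTop : mMax K ≠ (⊤ : Ideal (MvPolynomial (Fin n) K)) := by
    intro htop
    have hker : mMax K ≤ RingHom.ker (MvPolynomial.constantCoeff (σ := Fin n) (R := K)) := by
      rw [mMax, Ideal.span_le]
      rintro x ⟨i, rfl⟩
      exact RingHom.mem_ker.mpr (MvPolynomial.constantCoeff_X K i)
    have h1 : (1 : MvPolynomial (Fin n) K) ∈ mMax K := htop ▸ Submodule.mem_top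
    have := RingHom.mem_ker.mp (hker h1)
    rw [map_one] at this
    exact one_ne_zero this
  have hm : 0 < m := by
    by_contra hm0
    push_neg at hm0
    interval_cases m
    have hbot : I₀ = (⊥ : Ideal (MvPolynomial (Fin n) K)) := by
      rw [hI₀, Set.range_eq_empty, Ideal.span_empty]
    rw [hbot, Ideal.radical_bot_of_noZeroDivisors] at hradical
    have hX : (MvPolynomial.X i0 : MvPolynomial (Fin n) K) ∈ mMax K :=
      Ideal.subset_span (Set.mem_range_self i0)
    rw [← hradical] at hX
    exact MvPolynomial.X_ne_zero i0 (Ideal.mem_bot.mp hX)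
  have j0 : Fin m := ⟨0, hm⟩
  have hd₀ : 0 < d₀ := by
    by_contra hd0
    push_neg at hd0
    interval_cases d₀
    obtain ⟨b, hb⟩ := MvPolynomial.support_nonempty.mpr (hf j0)
    have hb0 : b = 0 := by
      have hwb : wdeg w b = 0 := hWH j0 b hb
      rw [wdeg] at hwb
      have hall := Finset.sum_eq_zero_iff.mp hwb
      ext i
      have h6 := hall i (Finset.mem_univ i)
      have h7 := hw i
      simp only [Finsupp.coe_zero, Pi.zero_apply]
      rcases Nat.mul_eq_zero.mp h6 with h8 | h8
      · omega
      · exact h8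
    subst hb0
    have hker : mMax K ≤ RingHom.ker (MvPolynomial.constantCoeff (σ := Fin n) (R := K)) := by
      rw [mMax, Ideal.span_le]
      rintro x ⟨i, rfl⟩
      exact RingHom.mem_ker.mpr (MvPolynomial.constantCoeff_X K i)
    have hmem : f j0 ∈ mMax K := hI₀m (hI₀ ▸ Ideal.subset_span (Set.mem_range_self j0))
    have hcc := RingHom.mem_ker.mp (hker hmem)
    rw [MvPolynomial.constantCoeff_eq] at hcc
    exact MvPolynomial.mem_support_iff.mp hb hcc
  -- Noetherian : some power of the maximal ideal is inside I₀
  obtain ⟨k, hk⟩ := Ideal.exists_radical_pow_le_of_fg I₀ (IsNoetherian.noetherian _)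
  rw [hradical] at hk
  set D := k * W + d₀ with hDdef
  have hDd : d₀ ≤ D := by omega
  have hD : ∀ b : Fin n →₀ ℕ, D ≤ wdeg w b →
      (MvPolynomial.monomial b (1 : K)) ∈ Ideal.span (Set.range f) := by
    intro b hb
    have hdeg : k ≤ ∑ i, b i := by
      have h1 : wdeg w b ≤ W * ∑ i, b i := by
        rw [wdeg, Finset.mul_sum]
        refine Finset.sum_le_sum fun i _ => ?_
        exact Nat.mul_le_mul_right _ (Finset.single_le_sum
          (fun j _ => Nat.zero_le (w j)) (Finset.mem_univ i))
      have h2 : W * k ≤ W * ∑ i, b i := by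
        have hcomm : W * k = k * W := Nat.mul_comm _ _
        omega
      exact Nat.le_of_mul_le_mul_left h2 hW
    have := monomial_mem_mMax_pow k b (1 : K) hdeg
    rw [← hI₀]
    exact hk this
  have hgw : ∀ i, g i ∈ wIdeal w (d₀ + 1) := by
    intro i
    by_cases hgi : g i = 0
    · rw [hgi]; exact Submodule.zero_mem _
    · intro b hb
      have h1 : wmd w (g i) ≤ wdeg w b :=
        Nat.sInf_le ⟨b, by simpa using hb, rfl⟩
      have h2 := hg i hgi
      omega
  have hhw : ∀ j, h j ∈ wIdeal w (d₀ + 1) := by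
    intro j
    by_cases hhj : h j = 0
    · rw [hhj]; exact Submodule.zero_mem _
    · intro b hb
      have h1 : wmd w (h j) ≤ wdeg w b :=
        Nat.sInf_le ⟨b, by simpa using hb, rfl⟩
      have h2 := hh j hhj
      omega
  have hfw : ∀ i, f i ∈ wIdeal w d₀ :=
    fun i b hb => le_of_eq (hWH i b hb).symm
  have hIle : I ≤ wIdeal w d₀ := by
    rw [hI, Ideal.span_le]
    rintro x (⟨i, rfl⟩ | ⟨j, rfl⟩)
    · exact Submodule.add_mem _ (hfw i) (wIdeal_anti (Nat.le_succ d₀) (hgw i))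
    · exact wIdeal_anti (Nat.le_succ d₀) (hhw j)
  have hI₀le : I₀ ≤ wIdeal w d₀ := by
    rw [hI₀, Ideal.span_le]
    rintro x ⟨i, rfl⟩
    exact hfw i
  -- the key induction
  have KI := key_induction f g d₀ D hd₀ hDd hWH hgw hD
  have hle' : Ideal.span (Set.range fun i => f i + g i) ≤ I :=
    hI ▸ Ideal.span_mono Set.subset_union_left
  have hEx : ∀ N (b : Fin n →₀ ℕ), D + N * d₀ ≤ wdeg w b + d₀ →
      ∃ G ∈ I ^ N, G - MvPolynomial.monomial b 1 ∈ wIdeal w (wdeg w b + 1) := by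
    intro N b hcond
    obtain ⟨G, hG1, hG2⟩ := (KI N b hcond).2
    exact ⟨G, Ideal.pow_right_mono hle' N hG1, hG2⟩
  have hEx₀ : ∀ N (b : Fin n →₀ ℕ), D + N * d₀ ≤ wdeg w b + d₀ →
      ∃ G ∈ I₀ ^ N, G - MvPolynomial.monomial b 1 ∈ wIdeal w (wdeg w b + 1) := by
    intro N b hcond
    refine ⟨MvPolynomial.monomial b 1, by rw [hI₀]; exact (KI N b hcond).1, ?_⟩
    rw [sub_self]
    exact Submodule.zero_mem _
  -- the main per-exponent estimate
  have main : ∀ (J : Ideal (MvPolynomial (Fin n) K)), J ≤ wIdeal w d₀ →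
      (∀ N (b : Fin n →₀ ℕ), D + N * d₀ ≤ wdeg w b + d₀ →
        ∃ G ∈ J ^ N, G - MvPolynomial.monomial b 1 ∈ wIdeal w (wdeg w b + 1)) →
      ∀ e : ℕ, W + D ≤ p ^ e * A →
        d₀ * nuInv p (mIdeal K a) J e ≤ p ^ e * A ∧
        p ^ e * A ≤ d₀ * nuInv p (mIdeal K a) J e + (W + D) := by
    intro J hJw hJex e hqA
    set q := p ^ e with hqdef
    have hqpos : 0 < q := pow_pos (by omega) e
    have hfr : frobeniusPower p e (mIdeal K a) = mIdeal K (fun i => a i * q) :=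
      frobeniusPower_mIdeal p e a
    set SS := {x : ℕ | ¬ J ^ x ≤ frobeniusPower p e (mIdeal K a)} with hSSdef
    have hnueq : nuInv p (mIdeal K a) J e = sSup SS := rfl
    -- upper bound for members of SS
    have husup : ∀ x ∈ SS, x * d₀ + W ≤ q * A := by
      intro x hx
      rw [hSSdef, Set.mem_setOf_eq, hfr] at hx
      obtain ⟨F, hFJ, hFM⟩ := SetLike.not_le_iff_exists.mp hx
      have hFw : F ∈ wIdeal w (x * d₀) := pow_le_wIdeal hJw x hFJ
      have hFM' : ¬ ∀ b ∈ F.support, ∃ i, a i * q ≤ b i := by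
        intro hall
        exact hFM (mem_mIdeal_of_support _ F hall)
      push_neg at hFM'
      obtain ⟨b, hb, hblt⟩ := hFM'
      have h1 : x * d₀ ≤ wdeg w b := hFw b hb
      have h2 : wdeg w b + W ≤ q * A := by
        have hterm : ∀ i ∈ Finset.univ, w i * b i + w i ≤ w i * (a i * q) := by
          intro i _
          have h3 : b i + 1 ≤ a i * q := hblt i
          calc w i * b i + w i = w i * (b i + 1) := by ring
            _ ≤ w i * (a i * q) := Nat.mul_le_mul_left _ h3
        have h4 : q * A = ∑ i, w i * (a i * q) := by
          rw [hAdef, Finset.mul_sum]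
          exact Finset.sum_congr rfl fun i _ => by ring
        calc wdeg w b + W = ∑ i, (w i * b i + w i) := by
              rw [wdeg, hWdef, Finset.sum_add_distrib]
          _ ≤ ∑ i, w i * (a i * q) := Finset.sum_le_sum hterm
          _ = q * A := h4.symm
      omega
    have hbdd : BddAbove SS := by
      refine ⟨q * A, fun x hx => ?_⟩
      have h1 := husup x hx
      have h2 : x ≤ x * d₀ := Nat.le_mul_of_pos_right x hd₀
      omega
    -- construct the witness exponent N
    set x0 := q * A - (W + D) with hx0def
    set N := x0 / d₀ + 1 with hNdef
    have e1 : d₀ * (x0 / d₀) + x0 % d₀ = x0 := Nat.div_add_mod x0 d₀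
    have e2 : x0 % d₀ < d₀ := Nat.mod_lt _ hd₀
    have e3 : N * d₀ = d₀ * (x0 / d₀) + d₀ := by rw [hNdef]; ring
    set bq : Fin n →₀ ℕ := Finsupp.equivFunOnFinite.symm (fun i => a i * q - 1) with hbqdef
    have hbq_apply : ∀ i, bq i = a i * q - 1 :=
      fun i => rfl
    have haq : ∀ i, 1 ≤ a i * q := fun i => Nat.mul_le_mul (ha i) hqpos
    have hwbq : wdeg w bq + W = q * A := by
      have hterm : ∀ i ∈ Finset.univ, w i * bq i + w i = w i * (a i * q) := by
        intro i _
        rw [hbq_apply i]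
        have := haq i
        have h5 : a i * q - 1 + 1 = a i * q := by omega
        calc w i * (a i * q - 1) + w i = w i * (a i * q - 1 + 1) := by ring
          _ = w i * (a i * q) := by rw [h5]
      have h4 : q * A = ∑ i, w i * (a i * q) := by
        rw [hAdef, Finset.mul_sum]
        exact Finset.sum_congr rfl fun i _ => by ring
      calc wdeg w bq + W = ∑ i, (w i * bq i + w i) := by
            rw [wdeg, hWdef, Finset.sum_add_distrib]
        _ = ∑ i, w i * (a i * q) := Finset.sum_congr rfl hterm
        _ = q * A := h4.symm
    have hqA' : W + D ≤ q * A := by rw [hqdef]; exact hqA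
    have hx0 : x0 + (W + D) = q * A := by rw [hx0def]; omega
    have hcond : D + N * d₀ ≤ wdeg w bq + d₀ := by omega
    obtain ⟨G, hGJ, hGsub⟩ := hJex N bq hcond
    have hGM : G ∉ mIdeal K (fun i => a i * q) := by
      intro hGM
      have hbqsupp : bq ∈ G.support := by
        rw [MvPolynomial.mem_support_iff]
        have h0 : MvPolynomial.coeff bq (G - MvPolynomial.monomial bq 1) = 0 := by
          by_contra h0
          have := hGsub bq (MvPolynomial.mem_support_iff.mpr h0)
          omega
        rw [MvPolynomial.coeff_sub, MvPolynomial.coeff_monomial, if_pos rfl] at h0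
        intro hG0
        rw [hG0] at h0
        simp at h0
      obtain ⟨i, hi⟩ := support_of_mem_mIdeal hGM bq hbqsupp
      rw [hbq_apply i] at hi
      have := haq i
      omega
    have hNS : N ∈ SS := by
      rw [hSSdef, Set.mem_setOf_eq, hfr]
      intro hle
      exact hGM (hle hGJ)
    have hνN : N ≤ sSup SS := le_csSup hbdd hNS
    have hνS : sSup SS ∈ SS := Nat.sSup_mem ⟨N, hNS⟩ hbdd
    have hup := husup _ hνS
    have hdown : d₀ * N ≤ d₀ * sSup SS := Nat.mul_le_mul_left d₀ hνN
    have hcomm1 : d₀ * sSup SS = sSup SS * d₀ := Nat.mul_comm _ _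
    have hcomm2 : d₀ * N = N * d₀ := Nat.mul_comm _ _
    rw [hnueq]
    rw [hqdef] at hup hx0 hqA' ⊢
    constructor
    · omega
    · omega
  -- eventual bounds
  have hev : ∀ᶠ e in atTop, W + D ≤ p ^ e * A := by
    rw [eventually_atTop]
    refine ⟨W + D, fun e he => ?_⟩
    have h1 : e < p ^ e := Nat.lt_pow_self hp1
    have h2 : p ^ e ≤ p ^ e * A := Nat.le_mul_of_pos_right _ hA
    omega
  have hubI : ∀ᶠ e in atTop, d₀ * nuInv p (mIdeal K a) I e ≤ p ^ e * A := by
    filter_upwards [hev] with e he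
    exact (main I hIle hEx e he).1
  have hlbI : ∀ᶠ e in atTop, p ^ e * A ≤ d₀ * nuInv p (mIdeal K a) I e + (W + D) := by
    filter_upwards [hev] with e he
    exact (main I hIle hEx e he).2
  have hubI₀ : ∀ᶠ e in atTop, d₀ * nuInv p (mIdeal K a) I₀ e ≤ p ^ e * A := by
    filter_upwards [hev] with e he
    exact (main I₀ hI₀le hEx₀ e he).1
  have hlbI₀ : ∀ᶠ e in atTop, p ^ e * A ≤ d₀ * nuInv p (mIdeal K a) I₀ e + (W + D) := by
    filter_upwards [hev] with e he
    exact (main I₀ hI₀le hEx₀ e he).2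
  exact ⟨limit_aux hp1 _ A d₀ (W + D) hd₀ hubI hlbI hc,
    limit_aux hp1 _ A d₀ (W + D) hd₀ hubI₀ hlbI₀ hc₀⟩
end
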